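/- If (L, irr(L)) is a minimally generated lattice with no parallels, then the rank generating function of its minor poset satisfies F(M(L,irr(L)); q) = 1 + q·F(L*; 1+q), where L* is the dual (order-reversed) lattice of L and F(L*;·) its rank generating function. -/
import Mathlib


open Finset

/-- A generator-enriched lattice datum inside an ambient lattice `L`:
a minimal element `z` together with a finite generating set of elements
strictly above `z`. The underlying set of elements consists of all joins
of `z` with subsets of the generating set. -/
structure GEL (L : Type*) [Lattice L] [DecidableEq L] where
  z : L
  gens : Finset L
  lt_gens : ∀ g ∈ gens, z < g

namespace GEL

variable {L K : Type*} [Lattice L] [OrderBot L] [DecidableEq L]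

/-- The underlying set of elements of a generator enriched lattice. -/
def carrier (M : GEL L) : Finset L :=
  M.gens.powerset.image fun X => X.sup id ⊔ M.z

/-- Deletion of a set of generators. -/
def delete (M : GEL L) (I : Finset L) : GEL L :=
  ⟨M.z, M.gens \ I, fun g hg => M.lt_gens g (Finset.mem_sdiff.mp hg).1⟩

/-- Restriction to a set of generators. -/
def restrict (M : GEL L) (I : Finset L) : GEL L :=
  M.delete (M.gens \ I)

/-- Contraction by a set of generators. -/
def contract (M : GEL L) (I : Finset L) : GEL L :=
  ⟨I.sup id ⊔ M.z,
   (M.gens.image fun g => g ⊔ (I.sup id ⊔ M.z)).erase (I.sup id ⊔ M.z),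
   fun g hg => by
     obtain ⟨hne, hg'⟩ := Finset.mem_erase.mp hg
     obtain ⟨h, -, rfl⟩ := Finset.mem_image.mp hg'
     exact lt_of_le_of_ne le_sup_right (Ne.symm hne)⟩

open Classical in
/-- Contraction by an element: contract by all generators below it. -/
noncomputable def contractEl (M : GEL L) (ℓ : L) : GEL L :=
  M.contract (M.gens.filter fun g => g ≤ ℓ)

/-- A single deletion or contraction step. -/
def Step (M N : GEL L) : Prop :=
  ∃ I ⊆ M.gens, N = M.delete I ∨ N = M.contract I

/-- `Minor M N` : `N` is a minor of `M`, i.e. obtained from `M` by a finite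
sequence of deletions and contractions. -/
def Minor (M N : GEL L) : Prop :=
  Relation.ReflTransGen Step M N

/-- The generator enriched lattice on a lattice with `⊥`, with the given generating set. -/
def ofGens (G : Finset L) (hG : ∀ g ∈ G, (⊥ : L) < g) : GEL L :=
  ⟨⊥, G, hG⟩

/-- The underlying type of the minor poset of `T`: all minors of `T`
together with an adjoined minimum `none`. -/
abbrev MP (T : GEL L) := Option {M : GEL L // T.Minor M}

/-- The order relation of the minor poset. -/
def mple (T : GEL L) : MP T → MP T → Prop
  | none, _ => True
  | some _, none => False
  | some A, some B => B.1.Minor A.1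

/-- The rank function of the minor poset. -/
def mrank (T : GEL L) : MP T → ℕ
  | none => 0
  | some A => A.1.gens.card + 1

/-- A parallel: an element `ℓ` and distinct generators `g, h` with
`g ⊔ ℓ = h ⊔ ℓ ≠ ℓ`. -/
def HasParallel (M : GEL L) : Prop :=
  ∃ ℓ ∈ M.carrier, ∃ g ∈ M.gens, ∃ h ∈ M.gens,
    g ≠ h ∧ g ⊔ ℓ = h ⊔ ℓ ∧ g ⊔ ℓ ≠ ℓ

/-- Isomorphism of generator enriched lattices: a join-preserving bijection of the
underlying sets carrying the generating set onto the generating set. -/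
def GIso [Lattice K] [OrderBot K] [DecidableEq K] (M : GEL L) (N : GEL K) : Prop :=
  ∃ f : L → K, Set.BijOn f ↑M.carrier ↑N.carrier ∧
    (∀ a ∈ M.carrier, ∀ b ∈ M.carrier, f (a ⊔ b) = f a ⊔ f b) ∧
    f '' ↑M.gens = ↑N.gens

open Classical in
/-- The image generator enriched lattice `⟨f(I) | f(z)⟩` of a strong map. -/
noncomputable def map [Lattice K] [DecidableEq K] (f : L → K) (M : GEL L) : GEL K :=
  ⟨f M.z, (M.gens.image f).filter fun y => f M.z < y,
   fun g hg => (Finset.mem_filter.mp hg).2⟩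

/-- `T` lifts join irreducibles: for every `ℓ` and generator `g` with `g ≰ ℓ`,
the element `g ⊔ ℓ` is join irreducible in the interval `[ℓ, ⊤]`. -/
def LiftsJI (T : GEL L) : Prop :=
  ∀ ℓ : L, ∀ g ∈ T.gens, ¬ g ≤ ℓ →
    ∀ a b : L, ℓ ≤ a → ℓ ≤ b → g ⊔ ℓ = a ⊔ b → g ⊔ ℓ = a ∨ g ⊔ ℓ = b

end GEL

namespace GEL

variable {L : Type*} [Lattice L] [OrderBot L] [DecidableEq L]

theorem ext' {M N : GEL L} (hz : M.z = N.z) (hg : M.gens = N.gens) : M = N := by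
  cases M; cases N; simp_all

instance [Fintype L] : Finite (GEL L) :=
  Finite.of_injective (fun M => (M.z, M.gens)) fun M N h =>
    ext' (congrArg Prod.fst h) (congrArg Prod.snd h)

theorem minor_iff (T : GEL L) (hcar : ∀ ℓ : L, ℓ ∈ T.carrier) (N : GEL L) :
    T.Minor N ↔ N.gens ⊆ (T.gens.image (· ⊔ N.z)).erase N.z := by
  constructor
  · intro h
    induction h with
    | refl =>
      intro g hg
      exact Finset.mem_erase.mpr ⟨(T.lt_gens g hg).ne',
        Finset.mem_image.mpr ⟨g, hg, sup_eq_left.mpr (T.lt_gens g hg).le⟩⟩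
    | @tail b c _ hstep ih =>
      obtain ⟨I, hI, hc | hc⟩ := hstep
      · subst hc
        intro x hx
        exact ih (Finset.mem_sdiff.mp hx).1
      · subst hc
        intro x hx
        obtain ⟨hne, hx'⟩ := Finset.mem_erase.mp hx
        obtain ⟨n, hn, rfl⟩ := Finset.mem_image.mp hx'
        obtain ⟨hne', hn'⟩ := Finset.mem_erase.mp (ih hn)
        obtain ⟨g, hg, rfl⟩ := Finset.mem_image.mp hn'
        refine Finset.mem_erase.mpr ⟨hne, Finset.mem_image.mpr ⟨g, hg, ?_⟩⟩
        show g ⊔ (I.sup id ⊔ b.z) = g ⊔ b.z ⊔ (I.sup id ⊔ b.z)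
        rw [sup_assoc, sup_eq_right.mpr (le_sup_right : b.z ≤ I.sup id ⊔ b.z)]
  · intro hsub
    obtain ⟨X, hX, hXz⟩ := Finset.mem_image.mp (hcar N.z)
    have hXg : X ⊆ T.gens := Finset.mem_powerset.mp hX
    have hCz : (T.contract X).z = N.z := hXz
    have hCg : (T.contract X).gens = (T.gens.image (· ⊔ N.z)).erase N.z := by
      show (T.gens.image fun g => g ⊔ (X.sup id ⊔ T.z)).erase (X.sup id ⊔ T.z) = _
      simp only [hXz]
    have hsub' : N.gens ⊆ (T.contract X).gens := hCg ▸ hsub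
    have hND : N = (T.contract X).delete ((T.contract X).gens \ N.gens) := by
      apply Eq.symm
      apply ext'
      · exact hCz
      · show (T.contract X).gens \ ((T.contract X).gens \ N.gens) = N.gens
        exact Finset.sdiff_sdiff_eq_self hsub'
    have h1 : Step T (T.contract X) := ⟨X, hXg, Or.inr rfl⟩
    have h2 : Step (T.contract X) N := ⟨_, Finset.sdiff_subset, Or.inl hND⟩
    exact Relation.ReflTransGen.head h1 (Relation.ReflTransGen.single h2)

theorem card_E (T : GEL L) [DecidableRel ((· ≤ ·) : L → L → Prop)]
    (hcar : ∀ ℓ : L, ℓ ∈ T.carrier) (hnp : ¬ T.HasParallel) (ℓ : L) :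
    ((T.gens.image (· ⊔ ℓ)).erase ℓ).card
      = T.gens.card - (T.gens.filter fun i => i ≤ ℓ).card := by
  have hset : (T.gens.image (· ⊔ ℓ)).erase ℓ
      = (T.gens.filter fun i => ¬ i ≤ ℓ).image (· ⊔ ℓ) := by
    ext x
    simp only [Finset.mem_erase, Finset.mem_image, Finset.mem_filter]
    constructor
    · rintro ⟨hne, g, hg, rfl⟩
      exact ⟨g, ⟨hg, fun hle => hne (sup_eq_right.mpr hle)⟩, rfl⟩
    · rintro ⟨g, ⟨hg, hle⟩, rfl⟩
      exact ⟨fun h => hle (sup_eq_right.mp h), g, hg, rfl⟩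
  have hinj : Set.InjOn (· ⊔ ℓ) ↑(T.gens.filter fun i => ¬ i ≤ ℓ) := by
    intro g hg h hh heq
    by_contra hne
    obtain ⟨hg1, hg2⟩ := Finset.mem_filter.mp (Finset.mem_coe.mp hg)
    obtain ⟨hh1, hh2⟩ := Finset.mem_filter.mp (Finset.mem_coe.mp hh)
    exact hnp ⟨ℓ, hcar ℓ, g, hg1, h, hh1, hne, heq, fun h0 => hg2 (sup_eq_right.mp h0)⟩
  rw [hset, Finset.card_image_of_injOn hinj]
  have := Finset.card_filter_add_card_filter_not (s := T.gens)
    (p := fun i => i ≤ ℓ)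
  omega

end GEL

/-- For a minimally generated lattice `(L, irr L)` with no parallels, the rank
generating function of the minor poset satisfies
`F(M(L, irr L); q) = 1 + q·F(L*; 1+q)`, where the dual lattice `L*` is graded
with rank equal to the corank in `L`; stated coefficientwise. -/
theorem minorPoset_rank_gen_function_no_parallels {L : Type*} [Lattice L]
    [OrderBot L] [DecidableEq L] [Fintype L]
    [DecidableRel ((· ≤ ·) : L → L → Prop)]
    (T : GEL L) (hcar : ∀ ℓ : L, ℓ ∈ T.carrier)
    (hmin : ∀ g : L, g ∈ T.gens ↔
      (g ≠ ⊥ ∧ ∀ a b : L, g = a ⊔ b → g = a ∨ g = b))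
    (hnp : ¬ T.HasParallel) :
    ∀ k : ℕ,
      (Nat.card {p : GEL.MP T // GEL.mrank T p = k} : ℤ) =
        ((1 + Polynomial.X *
            ∑ ℓ : L, (1 + Polynomial.X : Polynomial ℤ) ^
              (T.gens.card - (T.gens.filter fun i => i ≤ ℓ).card)).coeff k) := by
  have hminor := GEL.minor_iff T hcar
  intro k
  match k with
  | 0 =>
    have huniq : ∀ p : {p : GEL.MP T // GEL.mrank T p = 0}, p = ⟨none, rfl⟩ := by
      rintro ⟨p, hp⟩
      cases p with
      | none => rfl
      | some A => simp [GEL.mrank] at hp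
    have h1 : Nat.card {p : GEL.MP T // GEL.mrank T p = 0} = 1 :=
      Nat.card_eq_one_iff_unique.mpr
        ⟨⟨fun a b => (huniq a).trans (huniq b).symm⟩, ⟨⟨none, rfl⟩⟩⟩
    rw [h1]
    simp [Polynomial.mul_coeff_zero]
  | r + 1 =>
    set E : L → Finset L := fun ℓ => (T.gens.image (· ⊔ ℓ)).erase ℓ with hE
    set s : Finset (Σ _ : L, Finset L) :=
      Finset.univ.sigma fun ℓ => (E ℓ).powersetCard r with hs
    have hlt : ∀ (ℓ : L) (H : Finset L), H ⊆ E ℓ → ∀ g ∈ H, ℓ < g := by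
      intro ℓ H hH g hg
      obtain ⟨hne, hg'⟩ := Finset.mem_erase.mp (hH hg)
      obtain ⟨h, -, rfl⟩ := Finset.mem_image.mp hg'
      exact lt_of_le_of_ne le_sup_right (Ne.symm hne)
    let g : {x : (Σ _ : L, Finset L) // x ∈ s} → {p : GEL.MP T // GEL.mrank T p = r + 1} :=
      fun x =>
        have hx := Finset.mem_sigma.mp x.2
        have hx2 := Finset.mem_powersetCard.mp hx.2
        ⟨some ⟨⟨x.1.1, x.1.2, hlt _ _ hx2.1⟩, (hminor _).mpr hx2.1⟩,
          by simp [GEL.mrank, hx2.2]⟩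
    have hbij : Function.Bijective g := by
      constructor
      · intro a b hgg
        have e1 := congrArg Subtype.val hgg
        have e2 := Option.some.inj e1
        have e3 := congrArg Subtype.val e2
        have ez : a.1.1 = b.1.1 := congrArg GEL.z e3
        have eg : a.1.2 = b.1.2 := congrArg GEL.gens e3
        exact Subtype.ext (Sigma.ext ez (heq_of_eq eg))
      · rintro ⟨p, hp⟩
        cases p with
        | none => simp [GEL.mrank] at hp
        | some A =>
          have hsub : A.1.gens ⊆ E A.1.z := (hminor _).mp A.2
          have hcard : A.1.gens.card = r := by simpa [GEL.mrank] using hp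
          refine ⟨⟨⟨A.1.z, A.1.gens⟩, Finset.mem_sigma.mpr
            ⟨Finset.mem_univ _, Finset.mem_powersetCard.mpr ⟨hsub, hcard⟩⟩⟩, ?_⟩
          exact Subtype.ext (congrArg some (Subtype.ext (GEL.ext' rfl rfl)))
    have hcount : Nat.card {p : GEL.MP T // GEL.mrank T p = r + 1} = s.card := by
      rw [Nat.card_congr (Equiv.ofBijective g hbij).symm, Nat.card_eq_finsetCard]
    have hscard : s.card = ∑ ℓ : L, ((E ℓ).card).choose r := by
      rw [hs, Finset.card_sigma]
      exact Finset.sum_congr rfl fun ℓ _ => Finset.card_powersetCard r (E ℓ)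
    have hEc : ∀ ℓ : L, (E ℓ).card
        = T.gens.card - (T.gens.filter fun i => i ≤ ℓ).card := fun ℓ =>
      GEL.card_E T hcar hnp ℓ
    rw [hcount, hscard, Polynomial.coeff_add, Polynomial.coeff_X_mul,
      Polynomial.coeff_one, if_neg (Nat.succ_ne_zero r),
      Polynomial.finset_sum_coeff]
    simp only [Polynomial.coeff_one_add_X_pow, zero_add]
    push_cast
    exact Finset.sum_congr rfl fun ℓ _ => by rw [hEc ℓ]
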